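/- Let 0 < α, β < 1 and let g_α, g_β be nonnegative measurable functions on (0,∞) with Laplace transforms exp(-p^α), exp(-p^β) respectively for p > 0. Define M_α(t,x) = t^{-1/α} g_α(x t^{-1/α}) and N_β(y,t) = (t/(β y^{1+1/β})) g_β(t y^{-1/β}). Then for every y > 0 and p > 0: ∫_0^∞ e^{-px} (∫_0^∞ M_α(t,x) N_β(y,t) dt) dx = p^{α(β-1)} exp(-y p^{αβ}). -/

import Mathlib

open MeasureTheory Real Set

/-- A function with nonzero integral is integrable. -/
lemma LT_integrable_aux {f : ℝ → ℝ} {v : ℝ}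
    (h : (∫ x in Ioi (0 : ℝ), f x) = v) (hv : v ≠ 0) :
    IntegrableOn f (Ioi (0 : ℝ)) := by
  by_contra hc
  rw [MeasureTheory.integral_undef hc] at h
  exact hv h.symm

/-- Scaled Laplace transform: value. -/
lemma LT_scaled (α : ℝ) (g : ℝ → ℝ)
    (hgL : ∀ p : ℝ, 0 < p →
      (∫ x in Ioi (0 : ℝ), Real.exp (-p * x) * g x) = Real.exp (-(p ^ α)))
    {p c : ℝ} (hp : 0 < p) (hc : 0 < c) :
    (∫ x in Ioi (0 : ℝ), Real.exp (-p * x) * (c⁻¹ * g (x / c)))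
      = Real.exp (-((p * c) ^ α)) := by
  have key : (∫ x in Ioi (0 : ℝ),
      (fun u => Real.exp (-(p * c) * u) * g u) (c⁻¹ * x))
      = (c⁻¹)⁻¹ • ∫ x in Ioi (c⁻¹ * 0), Real.exp (-(p * c) * x) * g x :=
    integral_comp_mul_left_Ioi (fun u => Real.exp (-(p * c) * u) * g u) 0 (inv_pos.mpr hc)
  have h1 : ∀ x : ℝ, Real.exp (-p * x) * (c⁻¹ * g (x / c))
      = c⁻¹ * ((fun u => Real.exp (-(p * c) * u) * g u) (c⁻¹ * x)) := by
    intro x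
    have : -(p * c) * (c⁻¹ * x) = -p * x := by
      field_simp
    simp only [this, div_eq_inv_mul]
    ring
  simp_rw [h1]
  rw [MeasureTheory.integral_const_mul, key]
  rw [mul_zero] at *
  rw [hgL (p * c) (mul_pos hp hc), inv_inv, smul_eq_mul, ← mul_assoc,
    inv_mul_cancel₀ hc.ne', one_mul]

/-- Scaled Laplace transform: integrability. -/
lemma LT_scaled_integrable (α : ℝ) (g : ℝ → ℝ)
    (hgL : ∀ p : ℝ, 0 < p →
      (∫ x in Ioi (0 : ℝ), Real.exp (-p * x) * g x) = Real.exp (-(p ^ α)))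
    {p c : ℝ} (hp : 0 < p) (hc : 0 < c) :
    IntegrableOn (fun x => Real.exp (-p * x) * (c⁻¹ * g (x / c))) (Ioi (0 : ℝ)) := by
  have base : IntegrableOn (fun u => Real.exp (-(p * c) * u) * g u) (Ioi (0 : ℝ)) :=
    LT_integrable_aux (hgL (p * c) (mul_pos hp hc)) (Real.exp_ne_zero _)
  have : IntegrableOn (fun x => (fun u => Real.exp (-(p * c) * u) * g u) (c⁻¹ * x))
      (Ioi (0 : ℝ)) := by
    rw [integrableOn_Ioi_comp_mul_left_iff (fun u => Real.exp (-(p * c) * u) * g u) 0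
      (inv_pos.mpr hc), mul_zero]
    exact base
  have h1 : ∀ x : ℝ, Real.exp (-p * x) * (c⁻¹ * g (x / c))
      = c⁻¹ * ((fun u => Real.exp (-(p * c) * u) * g u) (c⁻¹ * x)) := by
    intro x
    have : -(p * c) * (c⁻¹ * x) = -p * x := by field_simp
    simp only [this, div_eq_inv_mul]
    ring
  simp_rw [h1]
  exact this.const_mul _


/-- Moment formula: differentiating the Laplace transform. -/
lemma LT_deriv (β : ℝ) (hβ0 : 0 < β) (g : ℝ → ℝ) (hg : Measurable g)
    (hgpos : ∀ x ∈ Ioi (0 : ℝ), 0 ≤ g x)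
    (hgL : ∀ p : ℝ, 0 < p →
      (∫ x in Ioi (0 : ℝ), Real.exp (-p * x) * g x) = Real.exp (-(p ^ β)))
    {q : ℝ} (hq : 0 < q) :
    IntegrableOn (fun s => s * Real.exp (-q * s) * g s) (Ioi (0 : ℝ)) ∧
    (∫ s in Ioi (0 : ℝ), s * Real.exp (-q * s) * g s)
      = β * q ^ (β - 1) * Real.exp (-(q ^ β)) := by
  set μ := volume.restrict (Ioi (0 : ℝ)) with hμ
  set F : ℝ → ℝ → ℝ := fun r s => Real.exp (-r * s) * g s with hF
  set F' : ℝ → ℝ → ℝ := fun r s => -(s * Real.exp (-r * s) * g s) with hF'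
  set bound : ℝ → ℝ := fun s => s * Real.exp (-(q/2) * s) * g s with hbound
  have hF_meas : ∀ᶠ r in nhds q, AEStronglyMeasurable (F r) μ :=
    Filter.Eventually.of_forall fun r =>
      (((measurable_id.const_mul (-r)).exp.mul hg)).aestronglyMeasurable
  have hF_int : Integrable (F q) μ :=
    LT_integrable_aux (hgL q hq) (Real.exp_ne_zero _)
  have hF'_meas : AEStronglyMeasurable (F' q) μ :=
    (((measurable_id.mul ((measurable_id.const_mul (-q)).exp)).mul hg).neg).aestronglyMeasurable
  have h_bound : ∀ᵐ s ∂μ, ∀ r ∈ Metric.ball q (q/2), ‖F' r s‖ ≤ bound s := by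
    filter_upwards [ae_restrict_mem measurableSet_Ioi] with s hs r hr
    have hs0 : (0:ℝ) < s := hs
    have hr2 : q/2 < r := by
      have := abs_lt.mp (mem_ball_iff_norm.mp hr)
      linarith [this.1]
    have hgs : 0 ≤ g s := hgpos s hs
    have h1 : ‖F' r s‖ = s * Real.exp (-r * s) * g s := by
      rw [hF', Real.norm_eq_abs, abs_neg, abs_of_nonneg]
      positivity
    rw [h1, hbound]
    have : Real.exp (-r * s) ≤ Real.exp (-(q/2) * s) := by
      apply Real.exp_le_exp.mpr
      nlinarith
    exact mul_le_mul_of_nonneg_right (mul_le_mul_of_nonneg_left this hs0.le) hgs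
  have bound_int : Integrable bound μ := by
    have maj : Integrable (fun s => (4/q) * (Real.exp (-(q/4) * s) * g s)) μ :=
      (LT_integrable_aux (hgL (q/4) (by positivity)) (Real.exp_ne_zero _)).const_mul _
    apply maj.mono
    · exact ((measurable_id.mul ((measurable_id.const_mul (-(q/2))).exp)).mul hg).aestronglyMeasurable
    · filter_upwards [ae_restrict_mem measurableSet_Ioi] with s hs
      have hs0 : (0:ℝ) < s := hs
      have hgs : 0 ≤ g s := hgpos s hs
      rw [Real.norm_eq_abs, Real.norm_eq_abs, abs_of_nonneg (by positivity),
        abs_of_nonneg (by positivity)]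
      have h1 : s ≤ (4/q) * Real.exp ((q/4) * s) := by
        have h3 := Real.add_one_le_exp ((q/4) * s)
        have h2 : (q/4) * s ≤ Real.exp ((q/4) * s) := by linarith
        calc s = (4/q) * ((q/4) * s) := by field_simp
          _ ≤ (4/q) * Real.exp ((q/4) * s) := by gcongr
      have h2 : Real.exp ((q/4) * s) * Real.exp (-(q/2) * s) = Real.exp (-(q/4) * s) := by
        rw [← Real.exp_add]; ring_nf
      calc s * Real.exp (-(q/2) * s) * g s
          ≤ ((4/q) * Real.exp ((q/4) * s)) * Real.exp (-(q/2) * s) * g s := by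
            apply mul_le_mul_of_nonneg_right _ hgs
            exact mul_le_mul_of_nonneg_right h1 (Real.exp_pos _).le
        _ = (4/q) * (Real.exp (-(q/4) * s) * g s) := by rw [mul_assoc ((4:ℝ)/q), h2]; ring
  have h_diff : ∀ᵐ s ∂μ, ∀ r ∈ Metric.ball q (q/2), HasDerivAt (F · s) (F' r s) r := by
    apply Filter.Eventually.of_forall
    intro s r _
    have h := (((hasDerivAt_id r).neg.mul_const s).exp).mul_const (g s)
    have h0 : F' r s = Real.exp (-(id r) * s) * (-1 * s) * g s := by
      simp only [hF', id_eq]; ring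
    rw [h0]
    exact h
  obtain ⟨hFi', hderiv⟩ := hasDerivAt_integral_of_dominated_loc_of_deriv_le
    (Metric.ball_mem_nhds q (half_pos hq)) hF_meas hF_int hF'_meas h_bound bound_int h_diff
  have heq : (fun r => ∫ s, F r s ∂μ) =ᶠ[nhds q] (fun r => Real.exp (-(r ^ β))) := by
    filter_upwards [Ioi_mem_nhds hq] with r hr
    exact hgL r hr
  have hderiv2 : HasDerivAt (fun r => Real.exp (-(r ^ β))) (∫ s, F' q s ∂μ) q :=
    hderiv.congr_of_eventuallyEq heq.symm
  have hd : HasDerivAt (fun r : ℝ => Real.exp (-(r ^ β)))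
      (Real.exp (-(q ^ β)) * -(β * q ^ (β - 1))) q :=
    ((Real.hasDerivAt_rpow_const (p := β) (Or.inl hq.ne')).neg).exp
  have huniq : (∫ s, F' q s ∂μ) = Real.exp (-(q ^ β)) * -(β * q ^ (β - 1)) :=
    hderiv2.unique hd
  have hneg : (∫ s, F' q s ∂μ) = -∫ s in Ioi (0:ℝ), s * Real.exp (-q * s) * g s := by
    rw [hF', hμ]
    exact integral_neg _
  constructor
  · have : IntegrableOn (fun s => -(F' q s)) (Ioi (0:ℝ)) := hFi'.neg
    simpa [hF'] using this
  · rw [hneg] at huniq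
    have := neg_eq_iff_eq_neg.mp huniq
    rw [this]
    ring


/-- The t-integral against the N kernel. -/
lemma LT_t_integral (α β : ℝ) (hα0 : 0 < α) (hβ0 : 0 < β) (g : ℝ → ℝ) (hg : Measurable g)
    (hgpos : ∀ x ∈ Ioi (0 : ℝ), 0 ≤ g x)
    (hgL : ∀ p : ℝ, 0 < p →
      (∫ x in Ioi (0 : ℝ), Real.exp (-p * x) * g x) = Real.exp (-(p ^ β)))
    {y p : ℝ} (hy : 0 < y) (hp : 0 < p) :
    IntegrableOn (fun t => Real.exp (-(p ^ α) * t) *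
      (t / (β * y ^ (1 + 1/β)) * g (t / y ^ (1/β)))) (Ioi (0 : ℝ)) ∧
    (∫ t in Ioi (0 : ℝ), Real.exp (-(p ^ α) * t) *
      (t / (β * y ^ (1 + 1/β)) * g (t / y ^ (1/β))))
      = p ^ (α * (β - 1)) * Real.exp (-y * p ^ (α * β)) := by
  have hc : (0:ℝ) < y ^ (1/β) := Real.rpow_pos_of_pos hy _
  have hpα : (0:ℝ) < p ^ α := Real.rpow_pos_of_pos hp _
  have hY : (0:ℝ) < y ^ (1 + 1/β) := Real.rpow_pos_of_pos hy _
  have hq : (0:ℝ) < p ^ α * y ^ (1/β) := mul_pos hpα hc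
  obtain ⟨hint, hval⟩ := LT_deriv β hβ0 g hg hgpos hgL hq
  set c := y ^ (1/β) with hcdef
  set q := p ^ α * c with hqdef
  set Y := y ^ (1 + 1/β) with hYdef
  set f : ℝ → ℝ := fun s => (c / (β * Y)) * (s * Real.exp (-q * s) * g s) with hfdef
  have key : ∀ t : ℝ, Real.exp (-(p ^ α) * t) * (t / (β * Y) * g (t / c)) = f (c⁻¹ * t) := by
    intro t
    have e1 : -q * (c⁻¹ * t) = -(p ^ α) * t := by
      rw [hqdef]; field_simp
    rw [hfdef]
    simp only [e1]
    rw [div_eq_inv_mul t c]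
    field_simp
  have hqβ : q ^ β = y * p ^ (α * β) := by
    rw [hqdef, Real.mul_rpow hpα.le hc.le, ← Real.rpow_mul hp.le, hcdef,
      ← Real.rpow_mul hy.le, one_div_mul_cancel hβ0.ne', Real.rpow_one]
    ring
  have hqβ1 : q ^ (β - 1) = p ^ (α * (β - 1)) * y ^ ((1/β) * (β - 1)) := by
    rw [hqdef, Real.mul_rpow hpα.le hc.le, ← Real.rpow_mul hp.le, hcdef,
      ← Real.rpow_mul hy.le]
  have hcc : c * c * y ^ ((1/β) * (β - 1)) = Y := by
    rw [hcdef, hYdef, ← Real.rpow_add hy, ← Real.rpow_add hy]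
    congr 1
    field_simp
    ring
  constructor
  · simp_rw [key]
    have : IntegrableOn (fun t => f (c⁻¹ * t)) (Ioi (0:ℝ)) := by
      rw [integrableOn_Ioi_comp_mul_left_iff f 0 (inv_pos.mpr hc), mul_zero]
      exact hint.const_mul _
    exact this
  · simp_rw [key]
    rw [integral_comp_mul_left_Ioi f 0 (inv_pos.mpr hc), mul_zero, inv_inv, smul_eq_mul,
      hfdef]
    rw [MeasureTheory.integral_const_mul, hval, hqβ, hqβ1]
    have hE : Real.exp (-(y * p ^ (α * β))) = Real.exp (-y * p ^ (α * β)) := by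
      rw [neg_mul]
    rw [hE]
    have hstep : c * (c / (β * Y) * (β * (p ^ (α * (β - 1)) * y ^ ((1/β) * (β - 1))) *
        Real.exp (-y * p ^ (α * β))))
        = (c * c * y ^ ((1/β) * (β - 1))) / Y *
          (p ^ (α * (β - 1)) * Real.exp (-y * p ^ (α * β))) := by
      field_simp
    rw [hstep, hcc, div_self hY.ne', one_mul]

theorem laplace_mixed_kernel (α β : ℝ) (hα0 : 0 < α) (hα1 : α < 1)
    (hβ0 : 0 < β) (hβ1 : β < 1)
    (gα gβ : ℝ → ℝ) (hgα : Measurable gα) (hgβ : Measurable gβ)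
    (hgαpos : ∀ x ∈ Ioi (0 : ℝ), 0 ≤ gα x) (hgβpos : ∀ x ∈ Ioi (0 : ℝ), 0 ≤ gβ x)
    (hgαL : ∀ p : ℝ, 0 < p →
      (∫ x in Ioi (0 : ℝ), Real.exp (-p * x) * gα x) = Real.exp (-(p ^ α)))
    (hgβL : ∀ p : ℝ, 0 < p →
      (∫ x in Ioi (0 : ℝ), Real.exp (-p * x) * gβ x) = Real.exp (-(p ^ β))) :
    ∀ y p : ℝ, 0 < y → 0 < p →
      (∫ x in Ioi (0 : ℝ), Real.exp (-p * x) *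
        ∫ t in Ioi (0 : ℝ),
          (t ^ (-(1 / α)) * gα (x / t ^ (1 / α))) *
          (t / (β * y ^ (1 + 1 / β)) * gβ (t / y ^ (1 / β))))
        = p ^ (α * (β - 1)) * Real.exp (-y * p ^ (α * β)) := by
  intro y p hy hp
  have hpα : (0:ℝ) < p ^ α := Real.rpow_pos_of_pos hp _
  set F : ℝ → ℝ → ℝ := fun x t => Real.exp (-p * x) *
    ((t ^ (-(1/α)) * gα (x / t ^ (1/α))) *
      (t / (β * y ^ (1 + 1/β)) * gβ (t / y ^ (1/β)))) with hFdef
  have hnn : ∀ x ∈ Ioi (0:ℝ), ∀ t ∈ Ioi (0:ℝ), 0 ≤ F x t := by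
    intro x hx t ht
    have hxp : (0:ℝ) < x := hx
    have htp : (0:ℝ) < t := ht
    have h1 : 0 ≤ gα (x / t ^ (1/α)) :=
      hgαpos _ (div_pos hxp (Real.rpow_pos_of_pos htp _))
    have h2 : 0 ≤ gβ (t / y ^ (1/β)) :=
      hgβpos _ (div_pos htp (Real.rpow_pos_of_pos hy _))
    have h3 : (0:ℝ) ≤ t ^ (-(1/α)) := Real.rpow_nonneg htp.le _
    have h4 : (0:ℝ) ≤ t / (β * y ^ (1 + 1/β)) := by positivity
    exact mul_nonneg (Real.exp_pos _).le
      (mul_nonneg (mul_nonneg h3 h1) (mul_nonneg h4 h2))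
  have hrw : ∀ t ∈ Ioi (0:ℝ), ∀ x : ℝ, F x t =
      (Real.exp (-p * x) * ((t ^ (1/α))⁻¹ * gα (x / t ^ (1/α)))) *
        (t / (β * y ^ (1 + 1/β)) * gβ (t / y ^ (1/β))) := by
    intro t ht x
    simp only [hFdef]
    rw [Real.rpow_neg (le_of_lt ht)]
    ring
  have hx_int : ∀ t ∈ Ioi (0:ℝ), IntegrableOn (fun x => F x t) (Ioi (0:ℝ)) := by
    intro t ht
    have := (LT_scaled_integrable α gα hgαL hp
      (Real.rpow_pos_of_pos ht (1/α))).mul_const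
      (t / (β * y ^ (1 + 1/β)) * gβ (t / y ^ (1/β)))
    exact IntegrableOn.congr_fun this (fun x _ => (hrw t ht x).symm) measurableSet_Ioi
  have hx_val : ∀ t ∈ Ioi (0:ℝ), (∫ x in Ioi (0:ℝ), F x t) =
      Real.exp (-(p ^ α) * t) *
        (t / (β * y ^ (1 + 1/β)) * gβ (t / y ^ (1/β))) := by
    intro t ht
    have htp : (0:ℝ) < t := ht
    have hc : (0:ℝ) < t ^ (1/α) := Real.rpow_pos_of_pos htp _
    have e1 : (p * t ^ (1/α)) ^ α = p ^ α * t := by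
      rw [Real.mul_rpow hp.le hc.le, ← Real.rpow_mul htp.le,
        one_div_mul_cancel hα0.ne', Real.rpow_one]
    calc (∫ x in Ioi (0:ℝ), F x t)
        = ∫ x in Ioi (0:ℝ),
            (Real.exp (-p * x) * ((t ^ (1/α))⁻¹ * gα (x / t ^ (1/α)))) *
              (t / (β * y ^ (1 + 1/β)) * gβ (t / y ^ (1/β))) :=
          setIntegral_congr_fun measurableSet_Ioi fun x _ => hrw t ht x
      _ = (∫ x in Ioi (0:ℝ),
            Real.exp (-p * x) * ((t ^ (1/α))⁻¹ * gα (x / t ^ (1/α)))) *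
              (t / (β * y ^ (1 + 1/β)) * gβ (t / y ^ (1/β))) := by
          rw [MeasureTheory.integral_mul_const]
      _ = Real.exp (-(p ^ α) * t) *
            (t / (β * y ^ (1 + 1/β)) * gβ (t / y ^ (1/β))) := by
          rw [LT_scaled α gα hgαL hp hc, e1, ← neg_mul]
  have hmeas : AEStronglyMeasurable (Function.uncurry F)
      ((volume.restrict (Ioi (0:ℝ))).prod (volume.restrict (Ioi (0:ℝ)))) := by
    apply Measurable.aestronglyMeasurable
    rw [hFdef]
    unfold Function.uncurry
    fun_prop
  have hFprod : Integrable (Function.uncurry F)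
      ((volume.restrict (Ioi (0:ℝ))).prod (volume.restrict (Ioi (0:ℝ)))) := by
    rw [MeasureTheory.integrable_prod_iff' hmeas]
    constructor
    · filter_upwards [ae_restrict_mem measurableSet_Ioi] with t ht
      exact hx_int t ht
    · have heq : ∀ t ∈ Ioi (0:ℝ),
          (∫ x in Ioi (0:ℝ), ‖F x t‖) = Real.exp (-(p ^ α) * t) *
            (t / (β * y ^ (1 + 1/β)) * gβ (t / y ^ (1/β))) := by
        intro t ht
        rw [← hx_val t ht]
        exact setIntegral_congr_fun measurableSet_Ioi fun x hx =>
          Real.norm_of_nonneg (hnn x hx t ht)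
      refine ((LT_t_integral α β hα0 hβ0 gβ hgβ hgβpos hgβL hy hp).1).congr ?_
      filter_upwards [ae_restrict_mem measurableSet_Ioi] with t ht
      exact (heq t ht).symm
  calc (∫ x in Ioi (0 : ℝ), Real.exp (-p * x) *
        ∫ t in Ioi (0 : ℝ),
          (t ^ (-(1 / α)) * gα (x / t ^ (1 / α))) *
          (t / (β * y ^ (1 + 1 / β)) * gβ (t / y ^ (1 / β))))
      = ∫ x in Ioi (0:ℝ), ∫ t in Ioi (0:ℝ), F x t :=
        setIntegral_congr_fun measurableSet_Ioi fun x _ =>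
          (MeasureTheory.integral_const_mul _ _).symm
    _ = ∫ t in Ioi (0:ℝ), ∫ x in Ioi (0:ℝ), F x t :=
        MeasureTheory.integral_integral_swap hFprod
    _ = ∫ t in Ioi (0:ℝ), Real.exp (-(p ^ α) * t) *
          (t / (β * y ^ (1 + 1/β)) * gβ (t / y ^ (1/β))) :=
        setIntegral_congr_fun measurableSet_Ioi fun t ht => hx_val t ht
    _ = p ^ (α * (β - 1)) * Real.exp (-y * p ^ (α * β)) :=
        (LT_t_integral α β hα0 hβ0 gβ hgβ hgβpos hgβL hy hp).2
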